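/- Let S = {p₁, …, pₙ} ⊆ ℝ² be a set of n points in general position whose x-coordinates are strictly increasing in the index, and such that p₂, …, pₙ appear in counterclockwise order around p₁, i.e., for all 2 ≤ a < b ≤ n the triple (p₁, p_a, p_b) is positively oriented. If for some index a with 2 ≤ a ≤ n−5 the four consecutive triples (p_a, p_{a+1}, p_{a+2}), (p_{a+1}, p_{a+2}, p_{a+3}), (p_{a+2}, p_{a+3}, p_{a+4}) and (p_{a+3}, p_{a+4}, p_{a+5}) are all negatively oriented, then the six points {p_a, p_{a+1}, p_{a+2}, p_{a+3}, p_{a+4}, p_{a+5}} form a 6-hole of S. -/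

import Mathlib

/-- Orientation determinant of three points in the plane:
`det [[1,1,1],[pₓ,qₓ,rₓ],[p_y,q_y,r_y]]`.
The triple `(p,q,r)` is positively oriented iff `det3 p q r > 0`,
and negatively oriented iff `det3 p q r < 0`. -/
noncomputable def det3 (p q r : ℝ × ℝ) : ℝ :=
  Matrix.det !![(1:ℝ), 1, 1; p.1, q.1, r.1; p.2, q.2, r.2]

/-- A set of points in the plane is in general position if no three
distinct points of it are collinear. -/
def InGenPos (S : Set (ℝ × ℝ)) : Prop :=
  ∀ p ∈ S, ∀ q ∈ S, ∀ r ∈ S, p ≠ q → p ≠ r → q ≠ r →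
    ¬ Collinear ℝ ({p, q, r} : Set (ℝ × ℝ))

/-- `P` is a `k`-gon of `S`: a `k`-element subset of `S` in convex position,
i.e. every point of `P` is an extreme point of the convex hull of `P`. -/
def IsGon (k : ℕ) (S P : Set (ℝ × ℝ)) : Prop :=
  P ⊆ S ∧ P.Finite ∧ P.ncard = k ∧
    ∀ p ∈ P, p ∈ Set.extremePoints ℝ (convexHull ℝ P)

/-- `P` is a `k`-hole of `S`: a `k`-gon of `S` whose convex hull contains
no point of `S` other than the `k` points of `P`. -/
def IsHole (k : ℕ) (S P : Set (ℝ × ℝ)) : Prop :=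
  IsGon k S P ∧ ∀ q ∈ S, q ∈ convexHull ℝ P → q ∈ P

/-! ### Auxiliary lemmas -/

lemma det3_eq (p q r : ℝ × ℝ) :
    det3 p q r = (q.1 - p.1) * (r.2 - p.2) - (r.1 - p.1) * (q.2 - p.2) := by
  simp [det3, Matrix.det_fin_three]; ring

lemma det3_self_left (u v : ℝ × ℝ) : det3 u v u = 0 := by rw [det3_eq]; ring

lemma det3_self_right (u v : ℝ × ℝ) : det3 u v v = 0 := by rw [det3_eq]; ring

lemma det3_cycle (p q r : ℝ × ℝ) : det3 p q r = det3 q r p := by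
  rw [det3_eq, det3_eq]; ring

lemma det3_swap (p q r : ℝ × ℝ) : det3 p q r = - det3 p r q := by
  rw [det3_eq, det3_eq]; ring

lemma det3_trans_left (p q r s : ℝ × ℝ) (hpq : p.1 < q.1) (hqr : q.1 < r.1)
    (hrs : r.1 < s.1) (h1 : det3 p q r < 0) (h2 : det3 q r s < 0) :
    det3 p q s < 0 := by
  have key : (r.1 - q.1) * det3 p q s
      = (s.1 - q.1) * det3 p q r + (q.1 - p.1) * det3 q r s := by
    simp only [det3_eq]; ring
  have hA : (s.1 - q.1) * det3 p q r < 0 :=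
    mul_neg_of_pos_of_neg (by linarith) h1
  have hB : (q.1 - p.1) * det3 q r s < 0 :=
    mul_neg_of_pos_of_neg (by linarith) h2
  nlinarith [key, hA, hB, sub_pos.2 hqr]

lemma det3_trans_right (p q r s : ℝ × ℝ) (hpq : p.1 < q.1) (hqr : q.1 < r.1)
    (hrs : r.1 < s.1) (h1 : det3 p q r < 0) (h2 : det3 q r s < 0) :
    det3 p r s < 0 := by
  have key : (r.1 - q.1) * det3 p r s
      = (s.1 - r.1) * det3 p q r + (r.1 - p.1) * det3 q r s := by
    simp only [det3_eq]; ring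
  have hA : (s.1 - r.1) * det3 p q r < 0 :=
    mul_neg_of_pos_of_neg (by linarith) h1
  have hB : (r.1 - p.1) * det3 q r s < 0 :=
    mul_neg_of_pos_of_neg (by linarith) h2
  nlinarith [key, hA, hB, sub_pos.2 hqr]

lemma det3_affine (u v x y : ℝ × ℝ) (a b : ℝ) (hab : a + b = 1) :
    det3 u v (a • x + b • y) = a * det3 u v x + b * det3 u v y := by
  have hb : b = 1 - a := by linarith
  subst hb
  simp only [det3_eq, Prod.fst_add, Prod.snd_add, Prod.smul_fst, Prod.smul_snd,
    smul_eq_mul]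
  ring

lemma convex_lt_of_affine (f : ℝ × ℝ → ℝ)
    (hf : ∀ u v : ℝ × ℝ, ∀ a b : ℝ, a + b = 1 → f (a • u + b • v) = a * f u + b * f v)
    (c : ℝ) : Convex ℝ {w : ℝ × ℝ | f w < c} := by
  intro u hu v hv a b ha hb hab
  simp only [Set.mem_setOf_eq] at hu hv ⊢
  rw [hf u v a b hab]
  rcases eq_or_lt_of_le ha with h0 | h0
  · have hb1 : b = 1 := by linarith
    rw [← h0, hb1]; simpa using hv
  · have h1 : a * f u < a * c := mul_lt_mul_of_pos_left hu h0
    have h2 : b * f v ≤ b * c := mul_le_mul_of_nonneg_left hv.le hb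
    have hc : a * c + b * c = c := by rw [← add_mul, hab, one_mul]
    linarith

lemma convex_fst_ge (c : ℝ) : Convex ℝ {w : ℝ × ℝ | c ≤ w.1} := by
  intro u hu v hv a b ha hb hab
  simp only [Set.mem_setOf_eq, Prod.fst_add, Prod.smul_fst, smul_eq_mul] at hu hv ⊢
  have h1 : a * c ≤ a * u.1 := mul_le_mul_of_nonneg_left hu ha
  have h2 : b * c ≤ b * v.1 := mul_le_mul_of_nonneg_left hv hb
  have hc : a * c + b * c = c := by rw [← add_mul, hab, one_mul]
  linarith

lemma convex_fst_le (c : ℝ) : Convex ℝ {w : ℝ × ℝ | w.1 ≤ c} := by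
  intro u hu v hv a b ha hb hab
  simp only [Set.mem_setOf_eq, Prod.fst_add, Prod.smul_fst, smul_eq_mul] at hu hv ⊢
  have h1 : a * u.1 ≤ a * c := mul_le_mul_of_nonneg_left hu ha
  have h2 : b * v.1 ≤ b * c := mul_le_mul_of_nonneg_left hv hb
  have hc : a * c + b * c = c := by rw [← add_mul, hab, one_mul]
  linarith

/-- A point of `P` at which an affine functional is strictly maximal over `P`
is an extreme point of the convex hull of `P`. -/
lemma mem_extremePoints_of_affine (P : Set (ℝ × ℝ)) (x : ℝ × ℝ) (f : ℝ × ℝ → ℝ)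
    (hf : ∀ u v : ℝ × ℝ, ∀ a b : ℝ, a + b = 1 → f (a • u + b • v) = a * f u + b * f v)
    (hxP : x ∈ P) (hne : (P \ {x}).Nonempty)
    (hlt : ∀ y ∈ P, y ≠ x → f y < f x) :
    x ∈ Set.extremePoints ℝ (convexHull ℝ P) := by
  have hsub : convexHull ℝ (P \ {x}) ⊆ {w : ℝ × ℝ | f w < f x} :=
    convexHull_min (fun y hy => hlt y hy.1 hy.2) (convex_lt_of_affine f hf _)
  have hPx : insert x (P \ {x}) = P := by
    rw [Set.insert_diff_singleton]; exact Set.insert_eq_self.2 hxP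
  have key : ∀ y ∈ convexHull ℝ P, f y ≤ f x ∧ (f y = f x → y = x) := by
    intro y hy
    rw [← hPx, convexHull_insert hne, mem_convexJoin] at hy
    obtain ⟨x', hx', z, hz, hyz⟩ := hy
    rw [Set.mem_singleton_iff] at hx'
    rw [hx'] at hyz
    obtain ⟨c, d, hc, hd, hcd, hsum⟩ := hyz
    have hfz : f z < f x := hsub hz
    have hfy : f y = c * f x + d * f z := by rw [← hsum]; exact hf x z c d hcd
    have hcx : c * f x + d * f x = f x := by rw [← add_mul, hcd, one_mul]
    constructor
    · have : d * f z ≤ d * f x := mul_le_mul_of_nonneg_left hfz.le hd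
      linarith
    · intro he
      have hd0 : d = 0 := by
        by_contra hd0
        have hdpos : 0 < d := lt_of_le_of_ne hd (Ne.symm hd0)
        have : d * f z < d * f x := mul_lt_mul_of_pos_left hfz hdpos
        linarith
      have hc1 : c = 1 := by linarith
      rw [← hsum, hd0, hc1]; simp
  refine mem_extremePoints.2 ⟨subset_convexHull ℝ P hxP, ?_⟩
  intro x₁ h₁ x₂ h₂ hseg
  obtain ⟨a, b, ha, hb, hab, hsum⟩ := hseg
  have k1 := key x₁ h₁
  have k2 := key x₂ h₂
  have hfx : f x = a * f x₁ + b * f x₂ := by rw [← hsum]; exact hf x₁ x₂ a b hab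
  have habx : a * f x + b * f x = f x := by rw [← add_mul, hab, one_mul]
  have e1 : f x₁ = f x := by
    by_contra h
    have hlt1 : a * f x₁ < a * f x := mul_lt_mul_of_pos_left (lt_of_le_of_ne k1.1 h) ha
    have hle2 : b * f x₂ ≤ b * f x := mul_le_mul_of_nonneg_left k2.1 hb.le
    linarith
  have e2 : f x₂ = f x := by
    by_contra h
    have hlt2 : b * f x₂ < b * f x := mul_lt_mul_of_pos_left (lt_of_le_of_ne k2.1 h) hb
    have hle1 : a * f x₁ ≤ a * f x := mul_le_mul_of_nonneg_left k1.1 ha.le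
    linarith
  exact ⟨k1.2 e1, k2.2 e2⟩

/-- For x-sorted points `p 1, …, p n` in general position, counterclockwise
around `p 1`: if four consecutive triples starting at index `a` (with
`2 ≤ a ≤ n - 5`) are all negatively oriented, then
`{p a, p (a+1), p (a+2), p (a+3), p (a+4), p (a+5)}` is a 6-hole. -/
theorem four_consecutive_negative_triples_give_6hole (n : ℕ) (p : ℕ → ℝ × ℝ)
    (hgp : InGenPos (p '' Set.Icc 1 n))
    (hx : ∀ i j : ℕ, 1 ≤ i → i < j → j ≤ n → (p i).1 < (p j).1)
    (hccw : ∀ a b : ℕ, 2 ≤ a → a < b → b ≤ n → det3 (p 1) (p a) (p b) > 0)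
    (a : ℕ) (ha : 2 ≤ a) (han : a + 5 ≤ n)
    (h1 : det3 (p a) (p (a + 1)) (p (a + 2)) < 0)
    (h2 : det3 (p (a + 1)) (p (a + 2)) (p (a + 3)) < 0)
    (h3 : det3 (p (a + 2)) (p (a + 3)) (p (a + 4)) < 0)
    (h4 : det3 (p (a + 3)) (p (a + 4)) (p (a + 5)) < 0) :
    IsHole 6 (p '' Set.Icc 1 n)
      {p a, p (a + 1), p (a + 2), p (a + 3), p (a + 4), p (a + 5)} := by
  set A := p a with hA
  set B := p (a + 1) with hB
  set C := p (a + 2) with hC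
  set D := p (a + 3) with hD
  set E := p (a + 4) with hE
  set F := p (a + 5) with hF
  -- x-coordinate facts
  have hAB : A.1 < B.1 := hx a (a + 1) (by omega) (by omega) (by omega)
  have hBC : B.1 < C.1 := hx (a + 1) (a + 2) (by omega) (by omega) (by omega)
  have hCD : C.1 < D.1 := hx (a + 2) (a + 3) (by omega) (by omega) (by omega)
  have hDE : D.1 < E.1 := hx (a + 3) (a + 4) (by omega) (by omega) (by omega)
  have hEF : E.1 < F.1 := hx (a + 4) (a + 5) (by omega) (by omega) (by omega)
  have hAC : A.1 < C.1 := hAB.trans hBC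
  have hAD : A.1 < D.1 := hAC.trans hCD
  have hAE : A.1 < E.1 := hAD.trans hDE
  have hAF : A.1 < F.1 := hAE.trans hEF
  have hBD : B.1 < D.1 := hBC.trans hCD
  have hBE : B.1 < E.1 := hBD.trans hDE
  have hBF : B.1 < F.1 := hBE.trans hEF
  have hCE : C.1 < E.1 := hCD.trans hDE
  have hCF : C.1 < F.1 := hCE.trans hEF
  have hDF : D.1 < F.1 := hDE.trans hEF
  -- derived orientation facts
  have hABD : det3 A B D < 0 := det3_trans_left A B C D hAB hBC hCD h1 h2
  have hACD : det3 A C D < 0 := det3_trans_right A B C D hAB hBC hCD h1 h2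
  have hBCE : det3 B C E < 0 := det3_trans_left B C D E hBC hCD hDE h2 h3
  have hBDE : det3 B D E < 0 := det3_trans_right B C D E hBC hCD hDE h2 h3
  have hCDF : det3 C D F < 0 := det3_trans_left C D E F hCD hDE hEF h3 h4
  have hCEF : det3 C E F < 0 := det3_trans_right C D E F hCD hDE hEF h3 h4
  have hACE : det3 A C E < 0 := det3_trans_right A B C E hAB hBC hCE h1 hBCE
  have hBCF : det3 B C F < 0 := det3_trans_left B C D F hBC hCD hDF h2 hCDF
  have hBDF : det3 B D F < 0 := det3_trans_right B C D F hBC hCD hDF h2 hCDF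
  have hACF : det3 A C F < 0 := det3_trans_right A B C F hAB hBC hCF h1 hBCF
  have hADE : det3 A D E < 0 := det3_trans_right A C D E hAC hCD hDE hACD h3
  have hADF : det3 A D F < 0 := det3_trans_left A D E F hAD hDE hEF hADE h4
  -- distinctness
  have nAB : A ≠ B := fun h => absurd (congrArg Prod.fst h) hAB.ne
  have nAC : A ≠ C := fun h => absurd (congrArg Prod.fst h) hAC.ne
  have nAD : A ≠ D := fun h => absurd (congrArg Prod.fst h) hAD.ne
  have nAE : A ≠ E := fun h => absurd (congrArg Prod.fst h) hAE.ne
  have nAF : A ≠ F := fun h => absurd (congrArg Prod.fst h) hAF.ne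
  have nBC : B ≠ C := fun h => absurd (congrArg Prod.fst h) hBC.ne
  have nBD : B ≠ D := fun h => absurd (congrArg Prod.fst h) hBD.ne
  have nBE : B ≠ E := fun h => absurd (congrArg Prod.fst h) hBE.ne
  have nBF : B ≠ F := fun h => absurd (congrArg Prod.fst h) hBF.ne
  have nCD : C ≠ D := fun h => absurd (congrArg Prod.fst h) hCD.ne
  have nCE : C ≠ E := fun h => absurd (congrArg Prod.fst h) hCE.ne
  have nCF : C ≠ F := fun h => absurd (congrArg Prod.fst h) hCF.ne
  have nDE : D ≠ E := fun h => absurd (congrArg Prod.fst h) hDE.ne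
  have nDF : D ≠ F := fun h => absurd (congrArg Prod.fst h) hDF.ne
  have nEF : E ≠ F := fun h => absurd (congrArg Prod.fst h) hEF.ne
  have hsubS : ({A, B, C, D, E, F} : Set (ℝ × ℝ)) ⊆ p '' Set.Icc 1 n := by
    rintro w hw
    simp only [Set.mem_insert_iff, Set.mem_singleton_iff] at hw
    rcases hw with rfl | rfl | rfl | rfl | rfl | rfl
    · exact ⟨a, Set.mem_Icc.2 ⟨by omega, by omega⟩, hA.symm⟩
    · exact ⟨a + 1, Set.mem_Icc.2 ⟨by omega, by omega⟩, hB.symm⟩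
    · exact ⟨a + 2, Set.mem_Icc.2 ⟨by omega, by omega⟩, hC.symm⟩
    · exact ⟨a + 3, Set.mem_Icc.2 ⟨by omega, by omega⟩, hD.symm⟩
    · exact ⟨a + 4, Set.mem_Icc.2 ⟨by omega, by omega⟩, hE.symm⟩
    · exact ⟨a + 5, Set.mem_Icc.2 ⟨by omega, by omega⟩, hF.symm⟩
  have hfin : ({A, B, C, D, E, F} : Set (ℝ × ℝ)).Finite := Set.toFinite _
  have hcard : ({A, B, C, D, E, F} : Set (ℝ × ℝ)).ncard = 6 := by
    rw [Set.ncard_insert_of_notMem (by simp [nAB, nAC, nAD, nAE, nAF]),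
      Set.ncard_insert_of_notMem (by simp [nBC, nBD, nBE, nBF]),
      Set.ncard_insert_of_notMem (by simp [nCD, nCE, nCF]),
      Set.ncard_insert_of_notMem (by simp [nDE, nDF]),
      Set.ncard_insert_of_notMem (by simp [nEF]),
      Set.ncard_singleton]
  have hext : ∀ w ∈ ({A, B, C, D, E, F} : Set (ℝ × ℝ)),
      w ∈ Set.extremePoints ℝ (convexHull ℝ ({A, B, C, D, E, F} : Set (ℝ × ℝ))) := by
    intro w hw
    simp only [Set.mem_insert_iff, Set.mem_singleton_iff] at hw
    have haff : ∀ q r : ℝ × ℝ, ∀ u v : ℝ × ℝ, ∀ α β : ℝ, α + β = 1 →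
        det3 q r (α • u + β • v) = α * det3 q r u + β * det3 q r v :=
      fun q r u v α β h => det3_affine q r u v α β h
    rcases hw with rfl | rfl | rfl | rfl | rfl | rfl
    · -- A : leftmost, maximize -x
      refine mem_extremePoints_of_affine _ _ (fun w => -w.1)
        (by intro u v α β h
            simp only [Prod.fst_add, Prod.smul_fst, smul_eq_mul]
            have : β = 1 - α := by linarith
            subst this; ring)
        (by simp) ⟨B, by simp, nAB.symm⟩ ?_
      intro y hy hy'
      simp only [Set.mem_insert_iff, Set.mem_singleton_iff] at hy
      rcases hy with rfl | rfl | rfl | rfl | rfl | rfl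
      · exact absurd rfl hy'
      all_goals linarith
    · -- B : functional det3 A C ·
      have hpos : (0:ℝ) < det3 A C B := by rw [det3_swap]; linarith
      refine mem_extremePoints_of_affine _ _ (fun w => det3 A C w)
        (haff A C) (by simp) ⟨A, by simp, nAB⟩ ?_
      intro y hy hy'
      simp only [Set.mem_insert_iff, Set.mem_singleton_iff] at hy
      rcases hy with rfl | rfl | rfl | rfl | rfl | rfl
      · simpa [det3_self_left] using hpos
      · exact absurd rfl hy'
      · simpa [det3_self_right] using hpos
      · linarith
      · linarith
      · linarith
    · -- C : functional det3 B D ·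
      have hpos : (0:ℝ) < det3 B D C := by rw [det3_swap]; linarith
      have hBDA : det3 B D A < 0 := by rw [← det3_cycle]; exact hABD
      refine mem_extremePoints_of_affine _ _ (fun w => det3 B D w)
        (haff B D) (by simp) ⟨A, by simp, nAC⟩ ?_
      intro y hy hy'
      simp only [Set.mem_insert_iff, Set.mem_singleton_iff] at hy
      rcases hy with rfl | rfl | rfl | rfl | rfl | rfl
      · linarith
      · simpa [det3_self_left] using hpos
      · exact absurd rfl hy'
      · simpa [det3_self_right] using hpos
      · linarith
      · linarith
    · -- D : functional det3 C E ·
      have hpos : (0:ℝ) < det3 C E D := by rw [det3_swap]; linarith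
      have hCEA : det3 C E A < 0 := by rw [← det3_cycle]; exact hACE
      have hCEB : det3 C E B < 0 := by rw [← det3_cycle]; exact hBCE
      refine mem_extremePoints_of_affine _ _ (fun w => det3 C E w)
        (haff C E) (by simp) ⟨A, by simp, nAD⟩ ?_
      intro y hy hy'
      simp only [Set.mem_insert_iff, Set.mem_singleton_iff] at hy
      rcases hy with rfl | rfl | rfl | rfl | rfl | rfl
      · linarith
      · linarith
      · simpa [det3_self_left] using hpos
      · exact absurd rfl hy'
      · simpa [det3_self_right] using hpos
      · linarith
    · -- E : functional det3 D F ·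
      have hpos : (0:ℝ) < det3 D F E := by rw [det3_swap]; linarith
      have hDFA : det3 D F A < 0 := by rw [← det3_cycle]; exact hADF
      have hDFB : det3 D F B < 0 := by rw [← det3_cycle]; exact hBDF
      have hDFC : det3 D F C < 0 := by rw [← det3_cycle]; exact hCDF
      refine mem_extremePoints_of_affine _ _ (fun w => det3 D F w)
        (haff D F) (by simp) ⟨A, by simp, nAE⟩ ?_
      intro y hy hy'
      simp only [Set.mem_insert_iff, Set.mem_singleton_iff] at hy
      rcases hy with rfl | rfl | rfl | rfl | rfl | rfl
      · linarith
      · linarith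
      · linarith
      · simpa [det3_self_left] using hpos
      · exact absurd rfl hy'
      · simpa [det3_self_right] using hpos
    · -- F : rightmost, maximize x
      refine mem_extremePoints_of_affine _ _ (fun w => w.1)
        (by intro u v α β h
            simp only [Prod.fst_add, Prod.smul_fst, smul_eq_mul])
        (by simp) ⟨A, by simp, nAF⟩ ?_
      intro y hy hy'
      simp only [Set.mem_insert_iff, Set.mem_singleton_iff] at hy
      rcases hy with rfl | rfl | rfl | rfl | rfl | rfl
      · linarith
      · linarith
      · linarith
      · linarith
      · linarith
      · exact absurd rfl hy'
  refine ⟨⟨hsubS, hfin, hcard, hext⟩, ?_⟩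
  intro q hq hqhull
  obtain ⟨j, hj, rfl⟩ := hq
  rw [Set.mem_Icc] at hj
  by_cases hja : a ≤ j ∧ j ≤ a + 5
  · have hcases : j = a ∨ j = a + 1 ∨ j = a + 2 ∨ j = a + 3 ∨ j = a + 4 ∨ j = a + 5 := by
      omega
    rcases hcases with rfl | rfl | rfl | rfl | rfl | rfl
    · rw [← hA]; simp
    · rw [← hB]; simp
    · rw [← hC]; simp
    · rw [← hD]; simp
    · rw [← hE]; simp
    · rw [← hF]; simp
  · exfalso
    have hlo : convexHull ℝ ({A, B, C, D, E, F} : Set (ℝ × ℝ)) ⊆ {w : ℝ × ℝ | A.1 ≤ w.1} := by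
      apply convexHull_min _ (convex_fst_ge A.1)
      rintro w hw
      simp only [Set.mem_insert_iff, Set.mem_singleton_iff] at hw
      rcases hw with rfl | rfl | rfl | rfl | rfl | rfl
      exacts [le_refl A.1, hAB.le, hAC.le, hAD.le, hAE.le, hAF.le]
    have hhi : convexHull ℝ ({A, B, C, D, E, F} : Set (ℝ × ℝ)) ⊆ {w : ℝ × ℝ | w.1 ≤ F.1} := by
      apply convexHull_min _ (convex_fst_le F.1)
      rintro w hw
      simp only [Set.mem_insert_iff, Set.mem_singleton_iff] at hw
      rcases hw with rfl | rfl | rfl | rfl | rfl | rfl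
      exacts [hAF.le, hBF.le, hCF.le, hDF.le, hEF.le, le_refl F.1]
    rcases (by omega : j < a ∨ a + 5 < j) with hj' | hj'
    · have h1 : (p j).1 < A.1 := hx j a (by omega) hj' (by omega)
      have h2 := hlo hqhull
      simp only [Set.mem_setOf_eq] at h2
      linarith
    · have h1 : F.1 < (p j).1 := hx (a + 5) j (by omega) hj' (by omega)
      have h2 := hhi hqhull
      simp only [Set.mem_setOf_eq] at h2
      linarith
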